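/- The history map agreement property follows from the three liveness properties: if Add-Get-Local, Get-Global, and Eventual-Get hold for a Setchain, then Get-After-Add holds: for every add(e) performed at a correct server, eventually all gets at every correct server return a history containing e. -/
import Mathlib

/-- Get-After-Add follows from Add-Get-Local, Get-Global and Eventual-Get.

Time is discrete (`ℕ`); `getS v t` is the set component and `getH v t` the set of
elements appearing in the history component returned by a `get` on server `v` at time
`t`; `addAt v e t` means that `add(e)` is invoked on server `v` at time `t`. -/
theorem get_after_add_of_liveness
    {Server α : Type*}
    (correct : Server → Prop)
    (addAt : Server → α → ℕ → Prop)
    (getS getH : Server → ℕ → Set α)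
    -- Add-Get-Local:
    (hAGL : ∀ v e t, correct v → addAt v e t →
      ∃ t', ∀ t'' ≥ t', e ∈ getS v t'')
    -- Get-Global:
    (hGG : ∀ v w e t, correct v → correct w → e ∈ getS v t →
      ∃ t', ∀ t'' ≥ t', e ∈ getS w t'')
    -- Eventual-Get:
    (hEG : ∀ v e t, correct v → e ∈ getS v t →
      ∃ t', ∀ t'' ≥ t', e ∈ getH v t'') :
    -- Get-After-Add:
    ∀ v e t, correct v → addAt v e t →
      ∀ w, correct w → ∃ t', ∀ t'' ≥ t', e ∈ getH w t'' := by
  intro v e t hv hadd w hw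
  obtain ⟨t1, h1⟩ := hAGL v e t hv hadd
  obtain ⟨t2, h2⟩ := hGG v w e t1 hv hw (h1 t1 le_rfl)
  exact hEG w e t2 hw (h2 t2 le_rfl)
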